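/- Let h ≥ 1 and m ≥ h − 1 be integers and set m' = m − h + 1. In the ring of multivariate formal power series over ℚ in the variables x₁, …, x_m, y₁, …, y_{m'}, z, consider F = (∏_{i=1}^{m} (1 + x_i + z)) · (∏_{j=1}^{m'} (1 + y_j + z))^{-1}, where the inverse exists since each factor 1 + y_j + z has constant term 1. Then every coefficient of F at a monomial of total degree h in which z occurs with positive exponent is zero; equivalently, the total-degree-h homogeneous component of F equals the total-degree-h homogeneous component of (∏_{i=1}^{m} (1 + x_i)) · (∏_{j=1}^{m'} (1 + y_j))^{-1}. (This is the statement that for a virtual bundle E of rank h − 1 and any line bundle ζ one has c_h(E ⊗ ζ) = c_h(E), expressed in Chern roots x_i, y_j and z = c₁(ζ).) -/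

import Mathlib

set_option linter.unusedSectionVars false
set_option maxHeartbeats 800000

open Finset (antidiagonal mem_antidiagonal)
open MvPowerSeries

section Aux
variable {σ : Type*} [DecidableEq σ] (z0 : σ)

lemma shift_sum (d : σ →₀ ℕ) (F : (σ →₀ ℕ) → (σ →₀ ℕ) → ℚ) :
    (Finset.sum (Finset.HasAntidiagonal.antidiagonal (d + Finsupp.single z0 1))
        (fun p : (σ →₀ ℕ) × (σ →₀ ℕ) => (p.1 z0 : ℚ) * F p.1 p.2))
      = Finset.sum (Finset.HasAntidiagonal.antidiagonal d)
        (fun q : (σ →₀ ℕ) × (σ →₀ ℕ) =>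
          ((q.1 z0 : ℚ) + 1) * F (q.1 + Finsupp.single z0 1) q.2) := by
  classical
  rw [← Finset.sum_filter_of_ne (p := fun p => p.1 z0 ≠ 0)
    (by intro p _ hne h0; exact hne (by rw [h0]; simp))]
  refine Finset.sum_nbij' (fun p => (p.1 - Finsupp.single z0 1, p.2))
    (fun q => (q.1 + Finsupp.single z0 1, q.2)) ?_ ?_ ?_ ?_ ?_
  · rintro ⟨a, b⟩ hp
    simp only [Finset.mem_filter, Finset.HasAntidiagonal.mem_antidiagonal] at hp ⊢
    obtain ⟨hab, hz⟩ := hp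
    have hle : Finsupp.single z0 1 ≤ a := by
      rw [Finsupp.single_le_iff]; omega
    have : a - Finsupp.single z0 1 + b + Finsupp.single z0 1 = d + Finsupp.single z0 1 := by
      rw [add_right_comm, tsub_add_cancel_of_le hle, hab]
    exact add_right_cancel this
  · rintro ⟨a, b⟩ hq
    simp only [Finset.HasAntidiagonal.mem_antidiagonal] at hq
    simp only [Finset.mem_filter, Finset.HasAntidiagonal.mem_antidiagonal]
    constructor
    · rw [add_right_comm, hq]
    · simp
  · rintro ⟨a, b⟩ hp
    simp only [Finset.mem_filter, Finset.HasAntidiagonal.mem_antidiagonal] at hp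
    have hle : Finsupp.single z0 1 ≤ a := by
      rw [Finsupp.single_le_iff]; omega
    simp [tsub_add_cancel_of_le hle]
  · rintro ⟨a, b⟩ _
    simp
  · rintro ⟨a, b⟩ hp
    simp only [Finset.mem_filter, Finset.HasAntidiagonal.mem_antidiagonal] at hp
    have hle : Finsupp.single z0 1 ≤ a := by
      rw [Finsupp.single_le_iff]; omega
    have h1 : 1 ≤ a z0 := by omega
    have h2 : (a - Finsupp.single z0 1 : σ →₀ ℕ) z0 = a z0 - 1 := by
      simp [Finsupp.tsub_apply]
    simp only [tsub_add_cancel_of_le hle, h2]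
    congr 1
    have := Nat.succ_pred_eq_of_pos h1
    push_cast [Nat.cast_sub h1]
    ring

lemma swap_sum (d : σ →₀ ℕ) (F : (σ →₀ ℕ) → (σ →₀ ℕ) → ℚ) :
    Finset.sum (Finset.HasAntidiagonal.antidiagonal d) (fun p : (σ →₀ ℕ) × (σ →₀ ℕ) => F p.1 p.2)
      = Finset.sum (Finset.HasAntidiagonal.antidiagonal d) (fun p : (σ →₀ ℕ) × (σ →₀ ℕ) => F p.2 p.1) := by
  classical
  refine Finset.sum_nbij' (fun p => (p.2, p.1)) (fun p => (p.2, p.1)) ?_ ?_ ?_ ?_ ?_ <;>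
    simp [Finset.HasAntidiagonal.mem_antidiagonal, add_comm]

def mdeg (d : σ →₀ ℕ) : ℕ := d.sum fun _ e => e
lemma mdeg_add (a b : σ →₀ ℕ) : mdeg (a + b) = mdeg a + mdeg b :=
  Finsupp.sum_add_index' (fun _ => rfl) (fun _ _ _ => rfl)
lemma mdeg_single (s : σ) (n : ℕ) : mdeg (Finsupp.single s n) = n :=
  Finsupp.sum_single_index rfl
lemma mdeg_zero : mdeg (0 : σ →₀ ℕ) = 0 := rfl

noncomputable def Tder (z0 : σ) (f : MvPowerSeries σ ℚ) : MvPowerSeries σ ℚ :=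
  fun d => ((d z0 : ℚ) + 1) * f (d + Finsupp.single z0 1) + (mdeg d : ℚ) * f d

lemma coeff_Tder (f : MvPowerSeries σ ℚ) (d : σ →₀ ℕ) :
    coeff d (Tder z0 f) =
      ((d z0 : ℚ) + 1) * coeff (d + Finsupp.single z0 1) f + (mdeg d : ℚ) * coeff d f :=
  rfl

lemma Tder_apply (f : MvPowerSeries σ ℚ) (d : σ →₀ ℕ) :
    Tder z0 f d =
      ((d z0 : ℚ) + 1) * f (d + Finsupp.single z0 1) + (mdeg d : ℚ) * f d :=
  rfl

lemma Tder_mul (f g : MvPowerSeries σ ℚ) :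
    Tder z0 (f * g) = Tder z0 f * g + f * Tder z0 g := by
  ext d
  rw [map_add, coeff_Tder, coeff_mul, coeff_mul, coeff_mul, coeff_mul]
  simp only [coeff_Tder, coeff_apply]
  have hsplit : ((d z0 : ℚ) + 1) *
      (Finset.sum (Finset.HasAntidiagonal.antidiagonal (d + Finsupp.single z0 1))
        (fun p : (σ →₀ ℕ) × (σ →₀ ℕ) => f p.1 * g p.2))
      = (Finset.sum (Finset.HasAntidiagonal.antidiagonal (d + Finsupp.single z0 1))
          (fun p : (σ →₀ ℕ) × (σ →₀ ℕ) => (p.1 z0 : ℚ) * (f p.1 * g p.2)))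
        + (Finset.sum (Finset.HasAntidiagonal.antidiagonal (d + Finsupp.single z0 1))
          (fun p : (σ →₀ ℕ) × (σ →₀ ℕ) => (p.2 z0 : ℚ) * (f p.1 * g p.2))) := by
    rw [Finset.mul_sum, ← Finset.sum_add_distrib]
    refine Finset.sum_congr rfl ?_
    intro p hp
    have h1 : p.1 + p.2 = d + Finsupp.single z0 1 := Finset.HasAntidiagonal.mem_antidiagonal.mp hp
    have h2 : p.1 z0 + p.2 z0 = d z0 + 1 := by
      have := DFunLike.congr_fun h1 z0
      simpa using this
    have h3 : ((p.1 z0 : ℚ) + p.2 z0) = (d z0 : ℚ) + 1 := by exact_mod_cast congrArg (Nat.cast (R := ℚ)) h2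
    rw [← h3]; ring
  have hE : ((mdeg d : ℚ)) *
      (Finset.sum (Finset.HasAntidiagonal.antidiagonal d) (fun p : (σ →₀ ℕ) × (σ →₀ ℕ) => f p.1 * g p.2))
      = Finset.sum (Finset.HasAntidiagonal.antidiagonal d)
          (fun p : (σ →₀ ℕ) × (σ →₀ ℕ) => ((mdeg p.1 : ℚ) + (mdeg p.2 : ℚ)) * (f p.1 * g p.2)) := by
    rw [Finset.mul_sum]
    refine Finset.sum_congr rfl ?_
    intro p hp
    have h1 : p.1 + p.2 = d := Finset.HasAntidiagonal.mem_antidiagonal.mp hp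
    have h2 : mdeg p.1 + mdeg p.2 = mdeg d := by rw [← h1, mdeg_add]
    have h3 : ((mdeg p.1 : ℚ) + mdeg p.2) = (mdeg d : ℚ) := by exact_mod_cast congrArg (Nat.cast (R := ℚ)) h2
    rw [← h3]
  have key1 := shift_sum z0 d (fun a b => f a * g b)
  have key2 : (Finset.sum (Finset.HasAntidiagonal.antidiagonal (d + Finsupp.single z0 1))
        (fun p : (σ →₀ ℕ) × (σ →₀ ℕ) => (p.2 z0 : ℚ) * (f p.1 * g p.2)))
      = Finset.sum (Finset.HasAntidiagonal.antidiagonal d)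
          (fun p : (σ →₀ ℕ) × (σ →₀ ℕ) =>
            ((p.2 z0 : ℚ) + 1) * (f p.1 * g (p.2 + Finsupp.single z0 1))) := by
    rw [swap_sum (d + Finsupp.single z0 1)
        (fun a b => (b z0 : ℚ) * (f a * g b)),
      shift_sum z0 d (fun a b => f b * g a),
      swap_sum d (fun a b => ((a z0 : ℚ) + 1) * (f b * g (a + Finsupp.single z0 1)))]
  rw [hsplit, hE, key1, key2, ← Finset.sum_add_distrib, ← Finset.sum_add_distrib,
    ← Finset.sum_add_distrib]
  refine Finset.sum_congr rfl ?_
  intro p hp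
  simp only [Tder_apply]
  ring

lemma Tder_add (f g : MvPowerSeries σ ℚ) :
    Tder z0 (f + g) = Tder z0 f + Tder z0 g := by
  ext d
  simp only [coeff_Tder, map_add]
  ring

lemma Tder_one : Tder z0 (1 : MvPowerSeries σ ℚ) = 0 := by
  ext d
  rw [coeff_Tder]
  have h1 : d + Finsupp.single z0 1 ≠ 0 := by
    intro h
    have := DFunLike.congr_fun h z0
    simp at this
  rw [coeff_one, coeff_one, if_neg h1, map_zero]
  by_cases hd : d = 0
  · subst hd; simp [mdeg_zero]
  · rw [if_neg hd]; ring

lemma Tder_X_ne {s : σ} (hs : s ≠ z0) : Tder z0 (X s : MvPowerSeries σ ℚ) = X s := by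
  ext d
  rw [coeff_Tder, coeff_X, coeff_X]
  have h1 : d + Finsupp.single z0 1 ≠ Finsupp.single s 1 := by
    intro h
    have := DFunLike.congr_fun h z0
    rw [Finsupp.add_apply, Finsupp.single_apply, if_pos rfl, Finsupp.single_apply,
      if_neg hs] at this
    omega
  rw [if_neg h1]
  by_cases hd : d = Finsupp.single s 1
  · subst hd; simp [mdeg_single]
  · rw [if_neg hd]; ring

lemma Tder_X_self : Tder z0 (X z0 : MvPowerSeries σ ℚ) = 1 + X z0 := by
  ext d
  rw [coeff_Tder, map_add]
  by_cases hd : d = 0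
  · subst hd
    have h0 : (0 : σ →₀ ℕ) ≠ Finsupp.single z0 (1:ℕ) := by
      intro h
      have := DFunLike.congr_fun h z0
      simp at this
    simp [coeff_X, coeff_one, mdeg_zero, h0]
  · by_cases hd2 : d = Finsupp.single z0 1
    · subst hd2
      have h2 : Finsupp.single z0 1 + Finsupp.single z0 1 ≠ Finsupp.single z0 (1:ℕ) := by
        intro h
        have := DFunLike.congr_fun h z0
        simp at this
      simp [coeff_X, coeff_one, mdeg_single, hd, h2]
    · have h1 : d + Finsupp.single z0 1 ≠ Finsupp.single z0 (1:ℕ) := fun h =>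
        hd (add_eq_right.mp h)
      simp [coeff_X, coeff_one, hd, hd2, h1]

lemma Tder_prod {ι : Type*} (s : Finset ι) (u : ι → MvPowerSeries σ ℚ)
    (hu : ∀ i ∈ s, Tder z0 (u i) = u i) :
    Tder z0 (∏ i ∈ s, u i) = (s.card : ℚ) • ∏ i ∈ s, u i := by
  classical
  induction s using Finset.cons_induction with
  | empty => simpa using Tder_one z0
  | cons a t ha ih =>
    rw [Finset.prod_cons, Tder_mul, hu a (Finset.mem_cons_self a t),
      ih (fun i hi => hu i (Finset.mem_cons_of_mem hi)), Finset.card_cons]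
    push_cast
    rw [mul_smul_comm, add_smul, one_smul, add_comm]

lemma Tder_inv (B : MvPowerSeries σ ℚ) (c : ℚ) (hB : B * B⁻¹ = 1)
    (hTB : Tder z0 B = c • B) : Tder z0 B⁻¹ = (-c) • B⁻¹ := by
  have h0 : Tder z0 (B * B⁻¹) = 0 := by rw [hB]; exact Tder_one z0
  rw [Tder_mul, hTB, smul_mul_assoc, hB] at h0
  have h2 : B * Tder z0 B⁻¹ = -(c • (1 : MvPowerSeries σ ℚ)) :=
    eq_neg_of_add_eq_zero_right h0
  calc Tder z0 B⁻¹ = B⁻¹ * B * Tder z0 B⁻¹ := by rw [mul_comm B⁻¹ B, hB, one_mul]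
    _ = B⁻¹ * (B * Tder z0 B⁻¹) := by rw [mul_assoc]
    _ = B⁻¹ * (-(c • 1)) := by rw [h2]
    _ = (-c) • B⁻¹ := by rw [← neg_smul, mul_smul_comm, mul_one]

/-- Evaluation of the variable `z0` at `0`, as a ring homomorphism. -/
noncomputable def pz (z0 : σ) : MvPowerSeries σ ℚ →+* MvPowerSeries σ ℚ where
  toFun f := fun d => if d z0 = 0 then f d else 0
  map_one' := by
    ext d
    show (if d z0 = 0 then coeff d 1 else 0) = coeff d 1
    split_ifs with h
    · rfl
    · rw [coeff_one, if_neg (fun h0 => h (by rw [h0]; rfl))]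
  map_mul' f g := by
    ext d
    show (if d z0 = 0 then coeff d (f * g) else 0) = coeff d (_ * _)
    rw [coeff_mul]
    split_ifs with h
    · erw [coeff_mul]
      refine Finset.sum_congr rfl ?_
      intro p hp
      have h1 : p.1 z0 + p.2 z0 = d z0 := by
        have := DFunLike.congr_fun (Finset.HasAntidiagonal.mem_antidiagonal.mp hp) z0
        simpa using this
      have h2 : p.1 z0 = 0 := by omega
      have h3 : p.2 z0 = 0 := by omega
      show f p.1 * g p.2 = (if p.1 z0 = 0 then f p.1 else 0) * (if p.2 z0 = 0 then g p.2 else 0)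
      rw [if_pos h2, if_pos h3]
    · erw [coeff_mul]
      refine (Finset.sum_eq_zero ?_).symm
      intro p hp
      have h1 : p.1 z0 + p.2 z0 = d z0 := by
        have := DFunLike.congr_fun (Finset.HasAntidiagonal.mem_antidiagonal.mp hp) z0
        simpa using this
      show (if p.1 z0 = 0 then f p.1 else 0) * (if p.2 z0 = 0 then g p.2 else 0) = 0
      by_cases h2 : p.1 z0 = 0
      · rw [if_neg (by omega : ¬ p.2 z0 = 0), mul_zero]
      · rw [if_neg h2, zero_mul]
  map_zero' := by
    ext d
    show (if d z0 = 0 then (0:ℚ) else 0) = 0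
    split_ifs <;> rfl
  map_add' f g := by
    ext d
    show (if d z0 = 0 then coeff d (f + g) else 0)
      = (if d z0 = 0 then coeff d f else 0) + (if d z0 = 0 then coeff d g else 0)
    split_ifs
    · exact map_add _ f g
    · rw [add_zero]

lemma coeff_pz (f : MvPowerSeries σ ℚ) (d : σ →₀ ℕ) :
    coeff d (pz z0 f) = if d z0 = 0 then coeff d f else 0 := rfl

lemma pz_X_self : pz z0 (X z0 : MvPowerSeries σ ℚ) = 0 := by
  ext d
  rw [coeff_pz, map_zero]
  split_ifs with h
  · rw [coeff_X, if_neg]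
    intro h0
    rw [h0] at h
    simp at h
  · rfl

lemma pz_X_ne {s : σ} (hs : s ≠ z0) : pz z0 (X s : MvPowerSeries σ ℚ) = X s := by
  ext d
  rw [coeff_pz]
  split_ifs with h
  · rfl
  · rw [coeff_X, if_neg]
    intro h0
    rw [h0, Finsupp.single_apply, if_neg hs] at h
    exact h rfl

end Aux

theorem stmt_6 (h m m' : ℕ) (h1 : 1 ≤ h) (hm : m + 1 = m' + h) :
    let σ := Fin m ⊕ Fin m' ⊕ Unit
    let x : Fin m → MvPowerSeries σ ℚ := fun i => MvPowerSeries.X (Sum.inl i)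
    let y : Fin m' → MvPowerSeries σ ℚ := fun j => MvPowerSeries.X (Sum.inr (Sum.inl j))
    let z : MvPowerSeries σ ℚ := MvPowerSeries.X (Sum.inr (Sum.inr ()))
    let F : MvPowerSeries σ ℚ := (∏ i, (1 + x i + z)) * (∏ j, (1 + y j + z))⁻¹
    let G : MvPowerSeries σ ℚ := (∏ i, (1 + x i)) * (∏ j, (1 + y j))⁻¹
    (∀ d : σ →₀ ℕ, (d.sum fun _ e => e) = h → 0 < d (Sum.inr (Sum.inr ())) →
      MvPowerSeries.coeff d F = 0) ∧
    (∀ d : σ →₀ ℕ, (d.sum fun _ e => e) = h →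
      MvPowerSeries.coeff d F = MvPowerSeries.coeff d G) := by
  intro σ x y z F G
  letI : DecidableEq σ := inferInstanceAs (DecidableEq (Fin m ⊕ Fin m' ⊕ Unit))
  set z0 : σ := Sum.inr (Sum.inr ()) with hz0
  have hxne : ∀ i : Fin m, (Sum.inl i : σ) ≠ z0 := fun i h => by simp [hz0] at h
  have hyne : ∀ j : Fin m', (Sum.inr (Sum.inl j) : σ) ≠ z0 := fun j h => by simp [hz0] at h
  set A : MvPowerSeries σ ℚ := ∏ i, (1 + x i + z) with hA
  set B : MvPowerSeries σ ℚ := ∏ j, (1 + y j + z) with hBdef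
  set A0 : MvPowerSeries σ ℚ := ∏ i, (1 + x i) with hA0
  set B0 : MvPowerSeries σ ℚ := ∏ j, (1 + y j) with hB0def
  -- invertibility
  have hcB : MvPowerSeries.constantCoeff B ≠ 0 := by
    rw [hBdef, map_prod]
    simp [y, z, map_add, constantCoeff_one, constantCoeff_X]
  have hcB0 : MvPowerSeries.constantCoeff B0 ≠ 0 := by
    rw [hB0def, map_prod]
    simp [y, map_add, constantCoeff_one, constantCoeff_X]
  have hB : B * B⁻¹ = 1 := MvPowerSeries.mul_inv_cancel _ hcB
  have hB0 : B0 * B0⁻¹ = 1 := MvPowerSeries.mul_inv_cancel _ hcB0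
  -- derivation facts
  have hfac : ∀ (s : σ), s ≠ z0 →
      Tder z0 (1 + (X s : MvPowerSeries σ ℚ) + X z0) = 1 + X s + X z0 := by
    intro s hs
    rw [Tder_add, Tder_add, Tder_one, Tder_X_ne z0 hs, Tder_X_self]
    ring
  have TA : Tder z0 A = (m : ℚ) • A := by
    rw [hA]
    have := Tder_prod z0 (Finset.univ : Finset (Fin m)) (fun i => 1 + x i + z)
      (fun i _ => hfac _ (hxne i))
    simpa using this
  have TB : Tder z0 B = (m' : ℚ) • B := by
    rw [hBdef]
    have := Tder_prod z0 (Finset.univ : Finset (Fin m')) (fun j => 1 + y j + z)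
      (fun j _ => hfac _ (hyne j))
    simpa using this
  have TBinv : Tder z0 B⁻¹ = (-(m' : ℚ)) • B⁻¹ := Tder_inv z0 B _ hB TB
  have hc : (m : ℚ) + -(m' : ℚ) = (h : ℚ) - 1 := by
    have := congrArg (Nat.cast : ℕ → ℚ) hm
    push_cast at this
    linarith
  have TF : Tder z0 F = ((h : ℚ) - 1) • F := by
    show Tder z0 (A * B⁻¹) = ((h : ℚ) - 1) • (A * B⁻¹)
    rw [Tder_mul, TA, TBinv, smul_mul_assoc, mul_smul_comm, ← add_smul, hc]
  -- Part 1
  have part1 : ∀ d : σ →₀ ℕ, (d.sum fun _ e => e) = h → 0 < d z0 →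
      MvPowerSeries.coeff d F = 0 := by
    intro d hdeg hdz
    have hle : Finsupp.single z0 1 ≤ d := by rw [Finsupp.single_le_iff]; omega
    set d' : σ →₀ ℕ := d - Finsupp.single z0 1 with hd'
    have hdd : d' + Finsupp.single z0 1 = d := tsub_add_cancel_of_le hle
    have hmd : mdeg d = h := hdeg
    have hmd' : (mdeg d' : ℚ) = (h : ℚ) - 1 := by
      have : mdeg d' + 1 = h := by
        rw [← hmd, ← hdd, mdeg_add, mdeg_single]
      have h2 : mdeg d' = h - 1 := by omega
      rw [h2]
      push_cast [Nat.cast_sub h1]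
      ring
    have heq := congrArg (MvPowerSeries.coeff d') TF
    rw [coeff_Tder, map_smul, smul_eq_mul, hmd', hdd] at heq
    have hz' : ((d' z0 : ℚ) + 1) ≠ 0 := by
      positivity
    have : ((d' z0 : ℚ) + 1) * MvPowerSeries.coeff d F = 0 := by linarith
    exact (mul_eq_zero.mp this).resolve_left hz'
  refine ⟨part1, ?_⟩
  -- pz F = G
  have pzA : pz z0 A = A0 := by
    rw [hA, hA0, map_prod]
    refine Finset.prod_congr rfl ?_
    intro i _
    rw [map_add, map_add, map_one, pz_X_ne z0 (hxne i), pz_X_self]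
    show 1 + x i + 0 = 1 + x i
    ring
  have pzB : pz z0 B = B0 := by
    rw [hBdef, hB0def, map_prod]
    refine Finset.prod_congr rfl ?_
    intro j _
    rw [map_add, map_add, map_one, pz_X_ne z0 (hyne j), pz_X_self]
    show 1 + y j + 0 = 1 + y j
    ring
  have pzBinv : pz z0 B⁻¹ = B0⁻¹ := by
    have h1 : B0 * pz z0 B⁻¹ = 1 := by rw [← pzB, ← map_mul, hB, map_one]
    calc pz z0 B⁻¹ = B0⁻¹ * B0 * pz z0 B⁻¹ := by rw [mul_comm B0⁻¹ B0, hB0, one_mul]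
      _ = B0⁻¹ * (B0 * pz z0 B⁻¹) := by rw [mul_assoc]
      _ = B0⁻¹ := by rw [h1, mul_one]
  have pzF : pz z0 F = G := by
    show pz z0 (A * B⁻¹) = A0 * B0⁻¹
    rw [map_mul, pzA, pzBinv]
  intro d hdeg
  have := congrArg (MvPowerSeries.coeff d) pzF
  rw [coeff_pz] at this
  by_cases hdz : d z0 = 0
  · rw [if_pos hdz] at this
    exact this.symm ▸ this
  · rw [if_neg hdz] at this
    rw [part1 d hdeg (by omega), ← this]
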